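/- Let n be a natural number, τ, θ ∈ ℂ, λ ∈ ℂ with λ ≠ 0, and let q, p : ℝ → Matrix (Fin n) (Fin n) ℂ be differentiable functions satisfying, for all t, q'(t) = p(t) and p'(t) = 2·(q t)³ + τ·q(t) + θ·1. Define the 2n×2n block matrices L(t) = fromBlocks (i·((λ²/2 + τ/2)·1 + (q t)²)) (λ·q t − i·p t − (θ/λ)·1) (λ·q t + i·p t − (θ/λ)·1) (−i·((λ²/2 + τ/2)·1 + (q t)²)) and M(t) = fromBlocks ((i·λ/2)·1) (q t) (q t) (−(i·λ/2)·1), where i is the imaginary unit. Then for all t, L'(t) + L(t)·M(t) − M(t)·L(t) = 0. -/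

import Mathlib

open Matrix

section aux
variable {m : Type*} [Fintype m]

/-- Entrywise derivative of a matrix-valued function. -/
def HasDerivAtMat (F : ℝ → Matrix m m ℂ) (F' : Matrix m m ℂ) (t : ℝ) : Prop :=
  ∀ i j, HasDerivAt (fun s => F s i j) (F' i j) t

lemma HasDerivAtMat.const (A : Matrix m m ℂ) (t : ℝ) :
    HasDerivAtMat (fun _ => A) 0 t :=
  fun i j => by simpa using hasDerivAt_const t (A i j)

lemma HasDerivAtMat.add {F G : ℝ → Matrix m m ℂ} {F' G' : Matrix m m ℂ} {t : ℝ}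
    (hF : HasDerivAtMat F F' t) (hG : HasDerivAtMat G G' t) :
    HasDerivAtMat (fun s => F s + G s) (F' + G') t :=
  fun i j => by simpa [Matrix.add_apply] using (hF i j).fun_add (hG i j)

lemma HasDerivAtMat.sub {F G : ℝ → Matrix m m ℂ} {F' G' : Matrix m m ℂ} {t : ℝ}
    (hF : HasDerivAtMat F F' t) (hG : HasDerivAtMat G G' t) :
    HasDerivAtMat (fun s => F s - G s) (F' - G') t :=
  fun i j => by simpa [Matrix.sub_apply] using (hF i j).fun_sub (hG i j)

lemma HasDerivAtMat.neg {F : ℝ → Matrix m m ℂ} {F' : Matrix m m ℂ} {t : ℝ}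
    (hF : HasDerivAtMat F F' t) :
    HasDerivAtMat (fun s => -(F s)) (-F') t :=
  fun i j => by simpa [Matrix.neg_apply] using (hF i j).fun_neg

lemma HasDerivAtMat.smul (c : ℂ) {F : ℝ → Matrix m m ℂ} {F' : Matrix m m ℂ} {t : ℝ}
    (hF : HasDerivAtMat F F' t) :
    HasDerivAtMat (fun s => c • F s) (c • F') t :=
  fun i j => by simpa [Matrix.smul_apply] using (hF i j).const_mul c

lemma HasDerivAtMat.mul {F G : ℝ → Matrix m m ℂ} {F' G' : Matrix m m ℂ} {t : ℝ}
    (hF : HasDerivAtMat F F' t) (hG : HasDerivAtMat G G' t) :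
    HasDerivAtMat (fun s => F s * G s) (F' * G t + F t * G') t := by
  intro i j
  have := HasDerivAt.fun_sum (fun k (_ : k ∈ Finset.univ) => (hF i k).fun_mul (hG k j))
  simpa [Matrix.mul_apply, Matrix.add_apply, Finset.sum_add_distrib] using this

lemma HasDerivAtMat.fromBlocks {A B C D : ℝ → Matrix m m ℂ}
    {A' B' C' D' : Matrix m m ℂ} {t : ℝ}
    (hA : HasDerivAtMat A A' t) (hB : HasDerivAtMat B B' t)
    (hC : HasDerivAtMat C C' t) (hD : HasDerivAtMat D D' t) :
    ∀ a b, HasDerivAt (fun s => Matrix.fromBlocks (A s) (B s) (C s) (D s) a b)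
      (Matrix.fromBlocks A' B' C' D' a b) t := by
  rintro (i | i) (j | j)
  · exact hA i j
  · exact hB i j
  · exact hC i j
  · exact hD i j

end aux

/-- The Lax matrix `L` of the autonomous matrix Painlevé II system. -/
noncomputable def laxLPII (n : ℕ) (τ θ lam : ℂ) (Q P : Matrix (Fin n) (Fin n) ℂ) :
    Matrix (Fin n ⊕ Fin n) (Fin n ⊕ Fin n) ℂ :=
  Matrix.fromBlocks
    (Complex.I • ((lam ^ 2 / 2 + τ / 2) • (1 : Matrix (Fin n) (Fin n) ℂ) + Q ^ 2))
    (lam • Q - Complex.I • P - (θ / lam) • (1 : Matrix (Fin n) (Fin n) ℂ))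
    (lam • Q + Complex.I • P - (θ / lam) • (1 : Matrix (Fin n) (Fin n) ℂ))
    (-(Complex.I • ((lam ^ 2 / 2 + τ / 2) • (1 : Matrix (Fin n) (Fin n) ℂ) + Q ^ 2)))

/-- The matrix `M` of the autonomous matrix Painlevé II Lax pair. -/
noncomputable def laxMPII (n : ℕ) (lam : ℂ) (Q : Matrix (Fin n) (Fin n) ℂ) :
    Matrix (Fin n ⊕ Fin n) (Fin n ⊕ Fin n) ℂ :=
  Matrix.fromBlocks
    ((Complex.I * lam / 2) • (1 : Matrix (Fin n) (Fin n) ℂ)) Q Q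
    (-((Complex.I * lam / 2) • (1 : Matrix (Fin n) (Fin n) ℂ)))

/-- Zero-curvature (Lax) representation `L' + L·M − M·L = 0` of the autonomous matrix
Painlevé II system `q' = p`, `p' = 2q³ + τq + θ·1`, valid for every nonzero value of the
spectral parameter `λ`; equivalently `L' = M·L − L·M` entrywise. -/
theorem autonomous_matrix_painleveII_lax (n : ℕ) (τ θ lam : ℂ) (hlam : lam ≠ 0)
    (q p : ℝ → Matrix (Fin n) (Fin n) ℂ)
    (hq : ∀ (t : ℝ) (i j : Fin n), HasDerivAt (fun s => q s i j) (p t i j) t)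
    (hp : ∀ (t : ℝ) (i j : Fin n),
      HasDerivAt (fun s => p s i j)
        (((2 : ℂ) • (q t) ^ 3 + τ • q t + θ • (1 : Matrix (Fin n) (Fin n) ℂ)) i j) t) :
    ∀ (t : ℝ) (a b : Fin n ⊕ Fin n),
      HasDerivAt (fun s => laxLPII n τ θ lam (q s) (p s) a b)
        ((laxMPII n lam (q t) * laxLPII n τ θ lam (q t) (p t)
          - laxLPII n τ θ lam (q t) (p t) * laxMPII n lam (q t)) a b) t := by
  intro t
  set Q := q t with hQdef
  set P := p t with hPdef
  set P' : Matrix (Fin n) (Fin n) ℂ := (2 : ℂ) • Q ^ 3 + τ • Q + θ • 1 with hP'def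
  have hQ : HasDerivAtMat q P t := fun i j => hq t i j
  have hP : HasDerivAtMat p P' t := fun i j => hp t i j
  have hone : HasDerivAtMat (fun _ : ℝ => (1 : Matrix (Fin n) (Fin n) ℂ)) 0 t :=
    HasDerivAtMat.const 1 t
  have hQsq : HasDerivAtMat (fun s => (q s) ^ 2) (P * Q + Q * P) t := by
    intro i j
    simpa [pow_two] using (hQ.mul hQ) i j
  have hA : HasDerivAtMat
      (fun s => Complex.I •
        ((lam ^ 2 / 2 + τ / 2) • (1 : Matrix (Fin n) (Fin n) ℂ) + (q s) ^ 2))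
      (Complex.I • (P * Q + Q * P)) t := by
    intro i j
    simpa using
      (HasDerivAtMat.smul Complex.I
        ((HasDerivAtMat.smul (lam ^ 2 / 2 + τ / 2) hone).add hQsq)) i j
  have hB : HasDerivAtMat
      (fun s => lam • q s - Complex.I • p s - (θ / lam) • (1 : Matrix (Fin n) (Fin n) ℂ))
      (lam • P - Complex.I • P') t := by
    intro i j
    simpa using
      (((HasDerivAtMat.smul lam hQ).sub (HasDerivAtMat.smul Complex.I hP)).sub
        (HasDerivAtMat.smul (θ / lam) hone)) i j
  have hC : HasDerivAtMat
      (fun s => lam • q s + Complex.I • p s - (θ / lam) • (1 : Matrix (Fin n) (Fin n) ℂ))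
      (lam • P + Complex.I • P') t := by
    intro i j
    simpa using
      (((HasDerivAtMat.smul lam hQ).add (HasDerivAtMat.smul Complex.I hP)).sub
        (HasDerivAtMat.smul (θ / lam) hone)) i j
  have key : laxMPII n lam Q * laxLPII n τ θ lam Q P
        - laxLPII n τ θ lam Q P * laxMPII n lam Q
      = Matrix.fromBlocks (Complex.I • (P * Q + Q * P))
          (lam • P - Complex.I • P')
          (lam • P + Complex.I • P')
          (-(Complex.I • (P * Q + Q * P))) := by
    rw [laxMPII, laxLPII, Matrix.fromBlocks_multiply, Matrix.fromBlocks_multiply,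
      sub_eq_add_neg, Matrix.fromBlocks_neg, Matrix.fromBlocks_add, Matrix.fromBlocks_inj]
    have hθ : θ / lam * lam = θ := div_mul_cancel₀ θ hlam
    refine ⟨?_, ?_, ?_, ?_⟩ <;>
    · simp only [hP'def, Matrix.smul_mul, Matrix.mul_smul, Matrix.mul_add, Matrix.add_mul,
        Matrix.mul_sub, Matrix.sub_mul, Matrix.mul_one, Matrix.one_mul, smul_smul,
        smul_add, smul_sub, pow_two, pow_succ, pow_zero, one_mul, mul_one, mul_assoc, hθ,
        Matrix.neg_mul, Matrix.mul_neg, smul_neg, neg_smul]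
      match_scalars <;> (try ring_nf) <;> (try simp [Complex.I_sq]) <;> (try field_simp)
  intro a b
  rw [key]
  exact HasDerivAtMat.fromBlocks hA hB hC hA.neg a b
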